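/- (Module-level form of the paper's vanishing lemma.) Let R be a ring, n ≥ 2 an integer, and let 0 → u →θ m →ψ₀ v₁ →ψ₁ v₂ → ⋯ →ψ_{n-1} v_n → 0 be an exact sequence of R-modules. Let ũ be an R-module such that: (a) the induced complex 0 → Hom_R(ũ, v₁) → Hom_R(ũ, v₂) → ⋯ → Hom_R(ũ, v_n) → 0 is exact, and (b) Ext^i_R(ũ, v_j) = 0 for all 1 ≤ i ≤ n-1 and all 1 ≤ j ≤ n-1. Then Hom_R(ũ, Coker θ) = 0 and Ext^{n-1}_R(ũ, Coker θ) = 0. -/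

import Mathlib

open CategoryTheory

open CategoryTheory Limits

namespace VanishingLemmaAux

variable {R : Type} [Ring R]

noncomputable def homMap (X : ChainComplex (ModuleCat.{0} R) ℕ)
    {A B : ModuleCat.{0} R} (f : A ⟶ B) :
    X.linearYonedaObj ℤ A ⟶ X.linearYonedaObj ℤ B where
  f i := ModuleCat.ofHom (Linear.rightComp ℤ (X.X i) f)
  comm' i j _ := by
    ext (g : X.X i ⟶ A)
    change (X.d j i ≫ g) ≫ f = X.d j i ≫ (g ≫ f)
    simp

lemma homMap_apply (X : ChainComplex (ModuleCat.{0} R) ℕ)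
    {A B : ModuleCat.{0} R} (f : A ⟶ B) (i : ℕ) (g : X.X i ⟶ A) :
    (homMap X f).f i g = g ≫ f := rfl

noncomputable def homSC (X : ChainComplex (ModuleCat.{0} R) ℕ)
    (S : ShortComplex (ModuleCat.{0} R)) :
    ShortComplex (CochainComplex (ModuleCat.{0} ℤ) ℕ) :=
  ShortComplex.mk (homMap X S.f) (homMap X S.g) (by
    ext i (g : X.X i ⟶ S.X₁)
    change (g ≫ S.f) ≫ S.g = _
    rw [Category.assoc, S.zero, comp_zero]
    rfl)

lemma homSC_shortExact (X : ChainComplex (ModuleCat.{0} R) ℕ)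
    [∀ n, Projective (X.X n)]
    (S : ShortComplex (ModuleCat.{0} R)) (hS : S.ShortExact) :
    (homSC X S).ShortExact := by
  have := hS.mono_f
  have := hS.epi_g
  apply HomologicalComplex.shortExact_of_degreewise_shortExact
  intro i
  apply ShortComplex.ShortExact.mk'
  · rw [ShortComplex.moduleCat_exact_iff]
    intro (x₂ : X.X i ⟶ S.X₂) (hx₂ : x₂ ≫ S.g = 0)
    exact ⟨hS.exact.lift x₂ hx₂, hS.exact.lift_f x₂ hx₂⟩
  · rw [ModuleCat.mono_iff_injective]
    intro (a : X.X i ⟶ S.X₁) (b : X.X i ⟶ S.X₁) (hab : a ≫ S.f = b ≫ S.f)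
    rwa [cancel_mono S.f] at hab
  · rw [ModuleCat.epi_iff_surjective]
    intro (h : X.X i ⟶ S.X₃)
    exact ⟨Projective.factorThru h S.g, Projective.factorThru_comp h S.g⟩

lemma subsingleton_of_isZero {M : ModuleCat.{0} ℤ} (h : IsZero M) : Subsingleton M := by
  refine subsingleton_of_forall_eq 0 (fun x => ?_)
  have h1 : (𝟙 M : M ⟶ M) = 0 := h.eq_of_src _ _
  calc x = (𝟙 M : M ⟶ M) x := rfl
    _ = (0 : M ⟶ M) x := by rw [h1]
    _ = 0 := rfl

lemma isZero_X₂ (T : ShortComplex (ModuleCat.{0} ℤ)) (hT : T.Exact)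
    (h1 : IsZero T.X₁) (h3 : IsZero T.X₃) : IsZero T.X₂ := by
  have s1 := subsingleton_of_isZero h1
  have s3 := subsingleton_of_isZero h3
  rw [ShortComplex.moduleCat_exact_iff] at hT
  have : Subsingleton T.X₂ := by
    refine subsingleton_of_forall_eq 0 (fun x => ?_)
    have hx : T.g x = 0 := Subsingleton.elim _ _
    obtain ⟨x₁, hx₁⟩ := hT x hx
    rw [← hx₁, Subsingleton.elim x₁ 0, map_zero]
  exact ModuleCat.isZero_of_subsingleton _


lemma step {W : ModuleCat.{0} R} (P : ProjectiveResolution W)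
    (S : ShortComplex (ModuleCat.{0} R)) (hS : S.ShortExact) (i : ℕ)
    (h3 : IsZero (((Ext ℤ (ModuleCat.{0} R) i).obj (Opposite.op W)).obj S.X₃))
    (h2 : IsZero (((Ext ℤ (ModuleCat.{0} R) (i + 1)).obj (Opposite.op W)).obj S.X₂)) :
    IsZero (((Ext ℤ (ModuleCat.{0} R) (i + 1)).obj (Opposite.op W)).obj S.X₁) := by
  have hK := homSC_shortExact P.complex S hS
  have hex := hK.homology_exact₁ i (i + 1) rfl
  refine IsZero.of_iso ?_ (P.isoExt (i + 1) S.X₁)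
  refine isZero_X₂ _ hex ?_ ?_
  · exact IsZero.of_iso h3 (P.isoExt i S.X₃).symm
  · exact IsZero.of_iso h2 (P.isoExt (i + 1) S.X₂).symm

lemma base {W : ModuleCat.{0} R} (P : ProjectiveResolution W)
    (S : ShortComplex (ModuleCat.{0} R)) (hS : S.ShortExact)
    (hsur : ∀ φ : W ⟶ S.X₃, ∃ φ' : W ⟶ S.X₂, φ' ≫ S.g = φ)
    (h2 : IsZero (((Ext ℤ (ModuleCat.{0} R) 1).obj (Opposite.op W)).obj S.X₂)) :
    IsZero (((Ext ℤ (ModuleCat.{0} R) 1).obj (Opposite.op W)).obj S.X₁) := by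
  have hK := homSC_shortExact P.complex S hS
  -- epi of cyclesMap at 0
  have hepi : Epi (HomologicalComplex.cyclesMap (homMap P.complex S.g) 0) := by
    rw [ModuleCat.epi_iff_surjective]
    intro y
    have hdφ : P.complex.d 1 0 ≫ ((P.complex.linearYonedaObj ℤ S.X₃).iCycles 0 y) = 0 := by
      have h0 : (P.complex.linearYonedaObj ℤ S.X₃).iCycles 0 ≫
          (P.complex.linearYonedaObj ℤ S.X₃).d 0 1 = 0 :=
        (P.complex.linearYonedaObj ℤ S.X₃).iCycles_d 0 1
      exact congrArg (fun (t : (P.complex.linearYonedaObj ℤ S.X₃).cycles 0 ⟶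
        (P.complex.linearYonedaObj ℤ S.X₃).X 1) => t y) h0
    have hfac : P.π.f 0 ≫ P.isColimitCokernelCofork.desc
        (CokernelCofork.ofπ _ hdφ) = (P.complex.linearYonedaObj ℤ S.X₃).iCycles 0 y :=
      Cofork.IsColimit.π_desc P.isColimitCokernelCofork
    obtain ⟨φ'', hφ''⟩ := hsur (P.isColimitCokernelCofork.desc (CokernelCofork.ofπ _ hdφ))
    have hdζ : (P.complex.linearYonedaObj ℤ S.X₂).d 0 1 (P.π.f 0 ≫ φ'') = 0 := by
      change P.complex.d 1 0 ≫ (P.π.f 0 ≫ φ'') = 0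
      exact (Category.assoc _ _ _).symm.trans ((congrArg (fun t => t ≫ φ'') P.complex_d_comp_π_f_zero).trans zero_comp)
    refine ⟨(P.complex.linearYonedaObj ℤ S.X₂).cyclesMk (P.π.f 0 ≫ φ'') 1 (by simp) hdζ, ?_⟩
    have hmono : Function.Injective ((P.complex.linearYonedaObj ℤ S.X₃).iCycles 0) :=
      (ModuleCat.mono_iff_injective _).1 inferInstance
    apply hmono
    have h1 : ∀ z, (P.complex.linearYonedaObj ℤ S.X₃).iCycles 0
        (HomologicalComplex.cyclesMap (homMap P.complex S.g) 0 z)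
        = (homMap P.complex S.g).f 0 ((P.complex.linearYonedaObj ℤ S.X₂).iCycles 0 z) :=
      fun z => congrArg (fun (t : (P.complex.linearYonedaObj ℤ S.X₂).cycles 0 ⟶
        (P.complex.linearYonedaObj ℤ S.X₃).X 0) => t z)
        (HomologicalComplex.cyclesMap_i (homMap P.complex S.g) 0)
    rw [h1]
    have h2' : (P.complex.linearYonedaObj ℤ S.X₂).iCycles 0
        ((P.complex.linearYonedaObj ℤ S.X₂).cyclesMk (P.π.f 0 ≫ φ'') 1 (by simp) hdζ)
        = (P.π.f 0 ≫ φ'') := (P.complex.linearYonedaObj ℤ S.X₂).i_cyclesMk _ 1 (by simp) hdζ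
    rw [h2']
    show (P.π.f 0 ≫ φ'') ≫ S.g = _
    exact (Category.assoc _ _ _).trans ((congrArg (fun t => P.π.f 0 ≫ t) hφ'').trans hfac)
  have hepiH : Epi (HomologicalComplex.homologyMap (homMap P.complex S.g) 0) := by
    haveI := hepi
    have hnat := HomologicalComplex.homologyπ_naturality (homMap P.complex S.g) 0
    exact epi_of_epi_fac hnat
  -- exact sequences
  have hex₁ := hK.homology_exact₁ 0 1 rfl
  refine IsZero.of_iso ?_ (P.isoExt 1 S.X₁)
  have hsub2 : Subsingleton ((P.complex.linearYonedaObj ℤ S.X₂).homology 1) :=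
    subsingleton_of_isZero (IsZero.of_iso h2 (P.isoExt 1 S.X₂).symm)
  have hcd : HomologicalComplex.homologyMap (homMap P.complex S.g) 0 ≫ hK.δ 0 1 rfl = 0 :=
    hK.comp_δ 0 1 rfl
  have : Subsingleton ((P.complex.linearYonedaObj ℤ S.X₁).homology 1) := by
    refine subsingleton_of_forall_eq 0 (fun x => ?_)
    rw [ShortComplex.moduleCat_exact_iff] at hex₁
    obtain ⟨t, ht⟩ := hex₁ x (@Subsingleton.elim _ hsub2 _ _)
    obtain ⟨s, hs⟩ := (ModuleCat.epi_iff_surjective _).1 hepiH t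
    have hz : (HomologicalComplex.homologyMap (homMap P.complex S.g) 0 ≫ hK.δ 0 1 rfl) s = 0 := by
      rw [hcd]; rfl
    rw [← ht, ← hs]
    exact hz
  exact ModuleCat.isZero_of_subsingleton _

noncomputable def scOfSurj {B C' : Type} [AddCommGroup B] [Module R B]
    [AddCommGroup C'] [Module R C'] (g : B →ₗ[R] C') : ShortComplex (ModuleCat.{0} R) :=
  ShortComplex.mk
    (ModuleCat.ofHom (LinearMap.ker g).subtype : ModuleCat.of R (LinearMap.ker g) ⟶ ModuleCat.of R B)
    (ModuleCat.ofHom g)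
    (by ext x; exact x.2)

lemma scOfSurj_shortExact {B C' : Type} [AddCommGroup B] [Module R B]
    [AddCommGroup C'] [Module R C'] (g : B →ₗ[R] C') (hg : Function.Surjective g) :
    (scOfSurj g).ShortExact := by
  apply ShortComplex.ShortExact.mk'
  · rw [ShortComplex.moduleCat_exact_iff]
    intro x₂ hx₂
    exact ⟨⟨x₂, hx₂⟩, rfl⟩
  · rw [ModuleCat.mono_iff_injective]
    exact Subtype.val_injective
  · rw [ModuleCat.epi_iff_surjective]
    exact hg

noncomputable def scMid {A B C' : Type} [AddCommGroup A] [Module R A] [AddCommGroup B] [Module R B]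
    [AddCommGroup C'] [Module R C'] (g : A →ₗ[R] B) (g' : B →ₗ[R] C')
    (h0 : ∀ x, g' (g x) = 0) : ShortComplex (ModuleCat.{0} R) :=
  ShortComplex.mk
    (ModuleCat.ofHom (LinearMap.ker g).subtype : ModuleCat.of R (LinearMap.ker g) ⟶ ModuleCat.of R A)
    (ModuleCat.ofHom (g.codRestrict (LinearMap.ker g') (fun x => h0 x)) :
      ModuleCat.of R A ⟶ ModuleCat.of R (LinearMap.ker g'))
    (by ext x; exact x.2)

lemma scMid_shortExact {A B C' : Type} [AddCommGroup A] [Module R A] [AddCommGroup B] [Module R B]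
    [AddCommGroup C'] [Module R C'] (g : A →ₗ[R] B) (g' : B →ₗ[R] C')
    (h0 : ∀ x, g' (g x) = 0) (hex : Function.Exact g g') :
    (scMid g g' h0).ShortExact := by
  apply ShortComplex.ShortExact.mk'
  · rw [ShortComplex.moduleCat_exact_iff]
    intro x₂ hx₂
    have : g x₂ = 0 := congrArg Subtype.val hx₂
    exact ⟨⟨x₂, this⟩, rfl⟩
  · rw [ModuleCat.mono_iff_injective]
    exact Subtype.val_injective
  · rw [ModuleCat.epi_iff_surjective]
    rintro ⟨y, hy⟩
    obtain ⟨x, hx⟩ := (hex y).1 hy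
    exact ⟨x, Subtype.ext hx⟩

end VanishingLemmaAux


open VanishingLemmaAux

/-- Module-level form of the vanishing lemma: given an exact sequence
`0 → u →θ m →π v₁ →ψ₁ v₂ → ⋯ →ψ_{n-1} v_n → 0` of `R`-modules and a module `w`
such that the induced complex `0 → Hom(w,v₁) → ⋯ → Hom(w,v_n) → 0` is exact and
`Ext^i(w, v_j) = 0` for `1 ≤ i ≤ n-1`, `1 ≤ j ≤ n-1`, one has
`Hom(w, Coker θ) = 0` and `Ext^{n-1}(w, Coker θ) = 0`. -/
theorem vanishing_lemma
    (R : Type) [Ring R] (n : ℕ) (hn : 2 ≤ n)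
    (u m : Type) [AddCommGroup u] [Module R u] [AddCommGroup m] [Module R m]
    (v : ℕ → Type) [∀ j, AddCommGroup (v j)] [∀ j, Module R (v j)]
    (θ : u →ₗ[R] m) (π : m →ₗ[R] v 1) (ψ : ∀ j, v j →ₗ[R] v (j + 1))
    -- exactness of `0 → u → m → v₁ → ⋯ → v_n → 0`
    (hθ : Function.Injective θ)
    (hθπ : Function.Exact θ π)
    (hπψ : Function.Exact π (ψ 1))
    (hψ : ∀ j, 1 ≤ j → j ≤ n - 2 → Function.Exact (ψ j) (ψ (j + 1)))
    (hsurj : Function.Surjective (ψ (n - 1)))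
    (w : Type) [AddCommGroup w] [Module R w]
    -- (a) the induced complex `0 → Hom(w, v₁) → ⋯ → Hom(w, v_n) → 0` is exact
    (ha₁ : Function.Injective (fun f : w →ₗ[R] v 1 => (ψ 1) ∘ₗ f))
    (ha₂ : ∀ j, 1 ≤ j → j ≤ n - 2 →
      Function.Exact (fun f : w →ₗ[R] v j => (ψ j) ∘ₗ f)
        (fun f : w →ₗ[R] v (j + 1) => (ψ (j + 1)) ∘ₗ f))
    (ha₃ : Function.Surjective (fun f : w →ₗ[R] v (n - 1) => (ψ (n - 1)) ∘ₗ f))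
    -- (b) `Ext^i(w, v_j) = 0` for `1 ≤ i ≤ n-1` and `1 ≤ j ≤ n-1`
    (hb : ∀ i j : ℕ, 1 ≤ i → i ≤ n - 1 → 1 ≤ j → j ≤ n - 1 →
      Limits.IsZero (((Ext ℤ (ModuleCat.{0} R) i).obj
        (Opposite.op (ModuleCat.of R w))).obj (ModuleCat.of R (v j)))) :
    (∀ f : w →ₗ[R] (m ⧸ LinearMap.range θ), f = 0) ∧
    Limits.IsZero (((Ext ℤ (ModuleCat.{0} R) (n - 1)).obj
      (Opposite.op (ModuleCat.of R w))).obj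
        (ModuleCat.of R (m ⧸ LinearMap.range θ))) := by
  -- the induced injection ι : m ⧸ range θ →ₗ v 1
  have hle : LinearMap.range θ ≤ LinearMap.ker π := by
    rintro x ⟨a, rfl⟩
    exact LinearMap.mem_ker.2 (hθπ.apply_apply_eq_zero a)
  set ι : (m ⧸ LinearMap.range θ) →ₗ[R] v 1 := (LinearMap.range θ).liftQ π hle with hι
  have hι_mk : ∀ x : m, ι (Submodule.Quotient.mk x) = π x := fun x => rfl
  have hιinj : Function.Injective ι := by
    rw [← LinearMap.ker_eq_bot, LinearMap.ker_eq_bot']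
    intro z hz
    obtain ⟨x, rfl⟩ := Submodule.Quotient.mk_surjective _ z
    rw [hι_mk] at hz
    rw [Submodule.Quotient.mk_eq_zero]
    exact (hθπ x).1 hz
  constructor
  · -- part 1
    intro f
    have hcomp : (fun g : w →ₗ[R] v 1 => (ψ 1) ∘ₗ g) (ι ∘ₗ f)
        = (fun g : w →ₗ[R] v 1 => (ψ 1) ∘ₗ g) 0 := by
      ext a
      obtain ⟨x, hx⟩ := Submodule.Quotient.mk_surjective _ (f a)
      simp only [LinearMap.comp_apply, LinearMap.zero_apply, map_zero]
      rw [← hx, hι_mk]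
      exact hπψ.apply_apply_eq_zero x
    have h0 := ha₁ hcomp
    ext a
    apply hιinj
    simp only [LinearMap.zero_apply, map_zero]
    exact congrArg (fun (t : w →ₗ[R] v 1) => t a) h0
  · -- part 2
    obtain ⟨P⟩ : Nonempty (ProjectiveResolution (ModuleCat.of R w)) :=
      ⟨ProjectiveResolution.of _⟩
    -- key induction
    have key : ∀ d : ℕ, d ≤ n - 2 → ∀ i j : ℕ, i = d + 1 → j = n - 1 - d →
        Limits.IsZero (((Ext ℤ (ModuleCat.{0} R) i).obj
          (Opposite.op (ModuleCat.of R w))).obj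
            (ModuleCat.of R (LinearMap.ker (ψ j)))) := by
      intro d
      induction d with
      | zero =>
        intro _ i j hi hj
        subst hi; subst hj
        refine base P (scOfSurj (ψ (n - 1 - 0))) (scOfSurj_shortExact _ ?_) ?_ ?_
        · simpa using hsurj
        · intro φ
          obtain ⟨f, hf⟩ := ha₃ φ.hom
          exact ⟨ModuleCat.ofHom f, ModuleCat.hom_ext hf⟩
        · exact hb 1 (n - 1) le_rfl (by omega) (by omega) le_rfl
      | succ d IH =>
        intro hd i j hi hj
        subst hi; subst hj
        have hj1 : 1 ≤ n - 1 - (d + 1) := by omega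
        have hj2 : n - 1 - (d + 1) ≤ n - 2 := by omega
        have hex := hψ _ hj1 hj2
        refine step P (scMid (ψ (n - 1 - (d + 1))) (ψ (n - 1 - (d + 1) + 1))
          (fun x => hex.apply_apply_eq_zero x)) (scMid_shortExact _ _ _ hex) (d + 1) ?_ ?_
        · exact IH (by omega) (d + 1) (n - 1 - (d + 1) + 1) rfl (by omega)
        · exact hb (d + 1 + 1) (n - 1 - (d + 1)) (by omega) (by omega) (by omega) (by omega)
    have hfin := key (n - 2) le_rfl (n - 1) 1 (by omega) (by omega)
    -- iso m ⧸ range θ ≃ ker (ψ 1)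
    have h1 : ∀ x : m, ψ 1 (π x) = 0 := fun x => hπψ.apply_apply_eq_zero x
    set q : m →ₗ[R] LinearMap.ker (ψ 1) := π.codRestrict (LinearMap.ker (ψ 1)) h1 with hq
    have hq0 : LinearMap.range θ ≤ LinearMap.ker q := by
      rintro x ⟨a, rfl⟩
      exact LinearMap.mem_ker.2 (Subtype.ext (hθπ.apply_apply_eq_zero a))
    set qbar : (m ⧸ LinearMap.range θ) →ₗ[R] LinearMap.ker (ψ 1) :=
      (LinearMap.range θ).liftQ q hq0 with hqbar
    have hbij : Function.Bijective qbar := by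
      constructor
      · rw [← LinearMap.ker_eq_bot, LinearMap.ker_eq_bot']
        intro z hz
        obtain ⟨x, rfl⟩ := Submodule.Quotient.mk_surjective _ z
        rw [Submodule.Quotient.mk_eq_zero]
        have : π x = 0 := congrArg Subtype.val hz
        exact (hθπ x).1 this
      · rintro ⟨y, hy⟩
        obtain ⟨x, hx⟩ := (hπψ y).1 hy
        exact ⟨Submodule.Quotient.mk x, Subtype.ext hx⟩
    have e : (m ⧸ LinearMap.range θ) ≃ₗ[R] LinearMap.ker (ψ 1) :=
      LinearEquiv.ofBijective qbar hbij
    exact Limits.IsZero.of_iso hfin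
      (((Ext ℤ (ModuleCat.{0} R) (n - 1)).obj
        (Opposite.op (ModuleCat.of R w))).mapIso e.toModuleIso)
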